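/- For every integer n ≥ 3, the sum over i = 1 to n−2 of sin((i+1)π/n) / sin(iπ/n) equals (n−1)·cos(π/n). -/

import Mathlib

open Real Finset

private lemma sin_pos_aux (n i : ℕ) (hn : 3 ≤ n) (h1 : 1 ≤ i) (h2 : i ≤ n - 1) :
    0 < Real.sin (i * Real.pi / n) := by
  have hnpos : (0:ℝ) < n := by positivity
  apply Real.sin_pos_of_pos_of_lt_pi
  · have : (1:ℝ) ≤ i := by exact_mod_cast h1
    positivity
  · have hi : (i:ℝ) < n := by
      have : i < n := by omega
      exact_mod_cast this
    rw [div_lt_iff₀ hnpos]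
    nlinarith [Real.pi_pos]

private lemma cot_sum_zero (n : ℕ) (hn : 3 ≤ n) :
    ∑ i ∈ Finset.Icc 1 (n-1), Real.cos (i * Real.pi / n) / Real.sin (i * Real.pi / n) = 0 := by
  have hnpos : (0:ℝ) < n := by positivity
  have key : ∀ i ∈ Finset.Icc 1 (n-1),
      ((n - i : ℕ) : ℝ) * Real.pi / n = Real.pi - i * Real.pi / n := by
    intro i hi
    simp only [Finset.mem_Icc] at hi
    have : ((n - i : ℕ) : ℝ) = (n:ℝ) - i := by
      have : i ≤ n := by omega
      push_cast [this]; ring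
    rw [this]; field_simp
  apply Finset.sum_involution (fun i _ => n - i)
  · intro i hi
    rw [key i hi, Real.sin_pi_sub, Real.cos_pi_sub]
    ring
  · intro i hi hf heq
    simp only [Finset.mem_Icc] at hi
    have h2i : n = 2 * i := by omega
    apply hf
    have hi0 : (i:ℝ) ≠ 0 := by
      exact_mod_cast (by omega : i ≠ 0)
    have : (i:ℝ) * Real.pi / n = Real.pi / 2 := by
      rw [h2i]; push_cast; field_simp
    rw [this, Real.cos_pi_div_two]
    simp
  · intro i hi
    simp only [Finset.mem_Icc] at hi ⊢
    omega
  · intro i hi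
    simp only [Finset.mem_Icc] at hi
    omega

theorem sum_sin_ratio_succ_eq (n : ℕ) (hn : 3 ≤ n) :
    ∑ i ∈ Finset.Icc 1 (n - 2),
      Real.sin ((i + 1) * Real.pi / n) / Real.sin (i * Real.pi / n) =
      (n - 1 : ℝ) * Real.cos (Real.pi / n) := by
  have hnpos : (0:ℝ) < n := by positivity
  have hsin1 : 0 < Real.sin (Real.pi / n) := by
    have := sin_pos_aux n 1 hn (le_refl 1) (by omega)
    simpa using this
  have hins : Finset.Icc 1 (n-1) = insert (n-1) (Finset.Icc 1 (n-2)) := by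
    ext j; simp only [Finset.mem_Icc, Finset.mem_insert]; omega
  have h0 := cot_sum_zero n hn
  rw [hins, Finset.sum_insert (by simp only [Finset.mem_Icc]; omega)] at h0
  have hlast : Real.cos ((n-1 : ℕ) * Real.pi / n) / Real.sin ((n-1 : ℕ) * Real.pi / n)
      = -(Real.cos (Real.pi / n) / Real.sin (Real.pi / n)) := by
    have harg : ((n-1 : ℕ) : ℝ) * Real.pi / n = Real.pi - Real.pi / n := by
      have : ((n-1 : ℕ) : ℝ) = (n:ℝ) - 1 := by
        push_cast [(by omega : 1 ≤ n)]; ring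
      rw [this]; field_simp
    rw [harg, Real.sin_pi_sub, Real.cos_pi_sub]
    ring
  rw [hlast] at h0
  have hS : ∑ i ∈ Finset.Icc 1 (n-2), Real.cos (i * Real.pi / n) / Real.sin (i * Real.pi / n)
      = Real.cos (Real.pi / n) / Real.sin (Real.pi / n) := by linarith
  have hterm : ∀ i ∈ Finset.Icc 1 (n-2),
      Real.sin ((i + 1) * Real.pi / n) / Real.sin (i * Real.pi / n)
      = Real.cos (Real.pi / n) + Real.sin (Real.pi / n) *
          (Real.cos (i * Real.pi / n) / Real.sin (i * Real.pi / n)) := by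
    intro i hi
    simp only [Finset.mem_Icc] at hi
    have hs : 0 < Real.sin (i * Real.pi / n) := sin_pos_aux n i hn hi.1 (by omega)
    have harg : ((i:ℝ) + 1) * Real.pi / n = i * Real.pi / n + Real.pi / n := by ring
    rw [harg, Real.sin_add]
    field_simp
  rw [Finset.sum_congr rfl hterm, Finset.sum_add_distrib, Finset.sum_const,
    ← Finset.mul_sum, hS, Nat.card_Icc]
  have hc : ((n - 2 + 1 - 1 : ℕ) : ℝ) = (n:ℝ) - 2 := by
    push_cast [(by omega : 2 ≤ n)]; ring
  rw [nsmul_eq_mul, hc]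
  field_simp
  ring
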